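/- Sim(𝔾₁, 𝔾₂) = 1 if and only if the set of unordered pairs of vertex types realized by edges of 𝔾₁ equals the set realized by edges of 𝔾₂, under the additional assumption that both graphs have no isolated vertices. -/
import Mathlib


open scoped Classical

/-- A road scenario: a finite undirected graph with vertex type labels. -/
structure LGraph where
  V : Finset ℕ
  E : Finset (Sym2 ℕ)
  label : ℕ → ℕ
  edge_mem : ∀ e ∈ E, ∀ x ∈ e, x ∈ V

/-- DE(e, G') = 1: G' contains an edge with the same unordered pair of vertex types. -/
def DE (G G' : LGraph) (e : Sym2 ℕ) : Prop :=
  ∃ e' ∈ G'.E, Sym2.map G'.label e' = Sym2.map G.label e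

/-- DV(u, G') = 1: every edge of G incident to u is duplicated in G'. -/
def DV (G G' : LGraph) (u : ℕ) : Prop :=
  ∀ e ∈ G.E, u ∈ e → DE G G' e

noncomputable def DVval (G G' : LGraph) (u : ℕ) : ℚ :=
  if DV G G' u then 1 else 0

/-- The topology similarity metric between two road scenarios. -/
noncomputable def Sim (G₁ G₂ : LGraph) : ℚ :=
  ((∑ u ∈ G₁.V, DVval G₁ G₂ u) + (∑ v ∈ G₂.V, DVval G₂ G₁ v)) /
    ((G₁.V.card : ℚ) + (G₂.V.card : ℚ))

/-- The set of unordered pairs of vertex types realized by the edges of G. -/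
def typePairs (G : LGraph) : Finset (Sym2 ℕ) :=
  G.E.image (Sym2.map G.label)


lemma sum_DVval_le (G G' : LGraph) :
    ∑ u ∈ G.V, DVval G G' u ≤ (G.V.card : ℚ) := by
  calc ∑ u ∈ G.V, DVval G G' u ≤ ∑ _u ∈ G.V, (1 : ℚ) := by
        apply Finset.sum_le_sum
        intro i _
        unfold DVval; split <;> norm_num
    _ = (G.V.card : ℚ) := by simp

lemma sum_DVval_eq_iff (G G' : LGraph) :
    (∑ u ∈ G.V, DVval G G' u = (G.V.card : ℚ)) ↔ ∀ u ∈ G.V, DV G G' u := by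
  constructor
  · intro h u hu
    by_contra hn
    have hlt : ∑ u ∈ G.V, DVval G G' u < ∑ _u ∈ G.V, (1 : ℚ) := by
      apply Finset.sum_lt_sum
      · intro i _; unfold DVval; split <;> norm_num
      · exact ⟨u, hu, by simp [DVval, hn]⟩
    simp only [Finset.sum_const, nsmul_eq_mul, mul_one] at hlt
    linarith
  · intro h
    have : ∀ u ∈ G.V, DVval G G' u = 1 := fun u hu => by simp [DVval, h u hu]
    rw [Finset.sum_congr rfl this]
    simp

lemma allDV_iff (G G' : LGraph) :
    (∀ u ∈ G.V, DV G G' u) ↔ typePairs G ⊆ typePairs G' := by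
  constructor
  · intro h p hp
    simp only [typePairs, Finset.mem_image] at hp ⊢
    obtain ⟨e, he, rfl⟩ := hp
    obtain ⟨x, hx⟩ : ∃ x, x ∈ e := ⟨e.out.1, Sym2.out_fst_mem e⟩
    have hxV : x ∈ G.V := G.edge_mem e he x hx
    obtain ⟨e', he', heq⟩ := h x hxV e he hx
    exact ⟨e', he', heq⟩
  · intro h u _ e he _
    have : Sym2.map G.label e ∈ typePairs G' := h (Finset.mem_image_of_mem _ he)
    simpa [typePairs, Finset.mem_image, DE] using this

theorem sim_eq_one_iff_typePairs (G₁ G₂ : LGraph)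
    (h₁ : G₁.V.Nonempty) (h₂ : G₂.V.Nonempty)
    (hiso₁ : ∀ u ∈ G₁.V, ∃ e ∈ G₁.E, u ∈ e)
    (hiso₂ : ∀ v ∈ G₂.V, ∃ e ∈ G₂.E, v ∈ e) :
    Sim G₁ G₂ = 1 ↔ typePairs G₁ = typePairs G₂ := by
  have hc₁ : (0:ℚ) < G₁.V.card := by exact_mod_cast Finset.card_pos.mpr h₁
  have hc₂ : (0:ℚ) < G₂.V.card := by exact_mod_cast Finset.card_pos.mpr h₂
  have hd : ((G₁.V.card : ℚ) + G₂.V.card) ≠ 0 := by linarith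
  rw [Sim, div_eq_one_iff_eq hd]
  have l1 := sum_DVval_le G₁ G₂
  have l2 := sum_DVval_le G₂ G₁
  constructor
  · intro h
    have e1 : ∑ u ∈ G₁.V, DVval G₁ G₂ u = (G₁.V.card : ℚ) := by linarith
    have e2 : ∑ v ∈ G₂.V, DVval G₂ G₁ v = (G₂.V.card : ℚ) := by linarith
    have s1 := (allDV_iff G₁ G₂).mp ((sum_DVval_eq_iff G₁ G₂).mp e1)
    have s2 := (allDV_iff G₂ G₁).mp ((sum_DVval_eq_iff G₂ G₁).mp e2)
    exact Finset.Subset.antisymm s1 s2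
  · intro h
    have e1 := (sum_DVval_eq_iff G₁ G₂).mpr ((allDV_iff G₁ G₂).mpr (by rw [h]))
    have e2 := (sum_DVval_eq_iff G₂ G₁).mpr ((allDV_iff G₂ G₁).mpr (by rw [h]))
    rw [e1, e2]
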